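/- Let G = (V,E,ω) be a biconnected weighted graph, let L be a 1-page book-embedding of G whose first vertex s and last vertex t are adjacent in G, and let L0 > 0 and H0 > 0 be real numbers such that L0 · H0 = Σ_{e∈E} ω(e). Then G admits a two-dimensional book-embedding supported by L whose bounding box is a rectangle of width L0 and height H0 (hence whose area equals Σ_{e∈E} ω(e)); in particular s and t are the first and the last vertex of the supporting 1-page book-embedding, respectively. -/

import Mathlib

namespace Schematic

/-- A 1-page book-embedding of `G`: vertices are linearly ordered via an injective
real-valued placement `f`, and no two edges cross. -/
def IsBE {V : Type*} (G : SimpleGraph V) (f : V → ℝ) : Prop :=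
  Function.Injective f ∧
  ∀ a b c d : V, G.Adj a b → G.Adj c d → ¬ (f a < f c ∧ f c < f b ∧ f b < f d)

/-- Edge `(u,v)` wraps around edge `(w,z)` (equivalently, `(w,z)` is nested into `(u,v)`),
where `(w,z)` is written in increasing order. -/
def Wraps {V : Type*} (G : SimpleGraph V) (f : V → ℝ) (u v w z : V) : Prop :=
  G.Adj u v ∧ G.Adj w z ∧ s(u, v) ≠ s(w, z) ∧
  f u ≤ f w ∧ f w < f z ∧ f z ≤ f v

/-- A graph is biconnected if it has at least 3 vertices, is connected,
and deleting any single vertex leaves a connected graph. -/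
def IsBiconnected {V : Type*} (G : SimpleGraph V) : Prop :=
  3 ≤ Nat.card V ∧ G.Connected ∧
  ∀ v : V, (G.induce (({v} : Set V)ᶜ)).Connected

/-- A two-dimensional book-embedding of a weighted graph: a supporting 1-page
book-embedding given by the x-coordinates `x`, and for each edge `(u,v)` with `u ≺ v`
a rectangle `[x u, x v] × [ylo u v, yhi u v]` with `ylo u v ≥ 0`, area equal to the
weight of the edge, and `ylo u v` equal to the maximum of `yhi` over the edges nested
into `(u,v)` (`0` if there is no such edge). -/
def IsTwoDimBE {V : Type*} (G : SimpleGraph V) (ω : V → V → ℝ)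
    (x : V → ℝ) (ylo yhi : V → V → ℝ) : Prop :=
  IsBE G x ∧
  (∀ u v : V, ylo u v = ylo v u) ∧
  (∀ u v : V, yhi u v = yhi v u) ∧
  (∀ u v : V, G.Adj u v → 0 ≤ ylo u v) ∧
  (∀ u v : V, G.Adj u v → x u < x v →
    (x v - x u) * (yhi u v - ylo u v) = ω u v) ∧
  (∀ u v : V, G.Adj u v → x u < x v →
    (∀ w z : V, Wraps G x u v w z → yhi w z ≤ ylo u v) ∧
    ((∃ w z : V, Wraps G x u v w z ∧ ylo u v = yhi w z) ∨
     ((¬ ∃ w z : V, Wraps G x u v w z) ∧ ylo u v = 0)))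

open Classical in
/-- The sum of the weights of all edges of `G` (each unordered edge counted once,
in its `f`-increasing orientation). -/
noncomputable def totalWeight {V : Type*} [Fintype V] (G : SimpleGraph V)
    (ω : V → V → ℝ) (f : V → ℝ) : ℝ :=
  ∑ p : V × V, if G.Adj p.1 p.2 ∧ f p.1 < f p.2 then ω p.1 p.2 else 0

/-- `[X₁,X₂] × [Y₁,Y₂]` is the bounding box of the two-dimensional book-embedding:
the smallest axis-parallel rectangle containing all the rectangles of the edges. -/
def IsBoundingBox {V : Type*} (G : SimpleGraph V) (x : V → ℝ) (ylo yhi : V → V → ℝ)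
    (X₁ X₂ Y₁ Y₂ : ℝ) : Prop :=
  (∀ u v : V, G.Adj u v → x u < x v →
    X₁ ≤ x u ∧ x v ≤ X₂ ∧ Y₁ ≤ ylo u v ∧ yhi u v ≤ Y₂) ∧
  (∃ u v : V, G.Adj u v ∧ x u < x v ∧ x u = X₁) ∧
  (∃ u v : V, G.Adj u v ∧ x u < x v ∧ x v = X₂) ∧
  (∃ u v : V, G.Adj u v ∧ x u < x v ∧ ylo u v = Y₁) ∧
  (∃ u v : V, G.Adj u v ∧ x u < x v ∧ yhi u v = Y₂)

open Classical

/-- Bundled context for the construction. -/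
structure Ctx (V : Type*) [Fintype V] where
  G : SimpleGraph V
  om : V → V → ℝ
  f : V → ℝ
  s : V
  t : V
  H0 : ℝ
  hpos : ∀ u v, G.Adj u v → 0 < om u v
  hinj : Function.Injective f
  hcross : ∀ a b c d, G.Adj a b → G.Adj c d → ¬ (f a < f c ∧ f c < f b ∧ f b < f d)
  hdel : ∀ v : V, (G.induce (({v} : Set V)ᶜ)).Connected
  hs : ∀ v, f s ≤ f v
  ht : ∀ v, f v ≤ f t
  hst : G.Adj s t
  hH : 0 < H0

namespace Ctx

variable {V : Type*} [Fintype V] (C : Ctx V)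

def Edg (p : V × V) : Prop := C.G.Adj p.1 p.2 ∧ C.f p.1 < C.f p.2

def Nst (p e : V × V) : Prop := C.f e.1 ≤ C.f p.1 ∧ C.f p.2 ≤ C.f e.2

noncomputable def Wt (e : V × V) : ℝ :=
  ∑ p : V × V, if C.Edg p ∧ C.Nst p e then C.om p.1 p.2 else 0

/-- Edges strictly wrapping `e`. -/
noncomputable def Anc (e : V × V) : Finset (V × V) :=
  Finset.univ.filter fun q => C.Edg q ∧ C.Nst e q ∧ q ≠ e

/-- Edges strictly nested in `e`. -/
noncomputable def Ns (e : V × V) : Finset (V × V) :=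
  Finset.univ.filter fun p => C.Edg p ∧ C.Nst p e ∧ p ≠ e

noncomputable def hi (e : V × V) : ℝ :=
  C.H0 * ∏ q ∈ C.Anc e, ((C.Wt q - C.om q.1 q.2) / C.Wt q)

noncomputable def lo (e : V × V) : ℝ :=
  C.hi e * ((C.Wt e - C.om e.1 e.2) / C.Wt e)

def Consec (a b : V) : Prop :=
  C.f a < C.f b ∧ ∀ w, ¬ (C.f a < C.f w ∧ C.f w < C.f b)

noncomputable def xc (v : V) : ℝ :=
  ∑ p : V × V, if C.Consec p.1 p.2 ∧ C.f p.2 ≤ C.f v then C.Wt p / C.hi p else 0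

def ChainPt (e : V × V) (w : V) : Prop :=
  C.f e.1 ≤ C.f w ∧ C.f w ≤ C.f e.2 ∧
  ∀ p ∈ C.Ns e, ¬ (C.f p.1 < C.f w ∧ C.f w < C.f p.2)

lemma mem_Ns {e p : V × V} : p ∈ C.Ns e ↔ C.Edg p ∧ C.Nst p e ∧ p ≠ e := by
  simp [Ns]

lemma mem_Anc {e q : V × V} : q ∈ C.Anc e ↔ C.Edg q ∧ C.Nst e q ∧ q ≠ e := by
  simp [Anc]

lemma nst_refl (e : V × V) : C.Nst e e := ⟨le_refl _, le_refl _⟩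

lemma nst_trans {p q r : V × V} (h1 : C.Nst p q) (h2 : C.Nst q r) : C.Nst p r :=
  ⟨le_trans h2.1 h1.1, le_trans h1.2 h2.2⟩

lemma nst_antisymm {p e : V × V} (h1 : C.Nst p e) (h2 : C.Nst e p) : p = e := by
  have h4 : p.1 = e.1 := C.hinj (le_antisymm h2.1 h1.1)
  have h5 : p.2 = e.2 := C.hinj (le_antisymm h1.2 h2.2)
  exact Prod.ext h4 h5

lemma edg_pos {p : V × V} (hp : C.Edg p) : 0 < C.om p.1 p.2 := C.hpos _ _ hp.1

lemma Wt_pos {e : V × V} (he : C.Edg e) : 0 < C.Wt e := by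
  have hPe : C.Edg e ∧ C.Nst e e := ⟨he, C.nst_refl e⟩
  have := Finset.single_le_sum
    (f := fun p : V × V => if C.Edg p ∧ C.Nst p e then C.om p.1 p.2 else 0)
    (fun i _ => by
      by_cases hPi : C.Edg i ∧ C.Nst i e
      · simpa [hPi] using (C.edg_pos hPi.1).le
      · simp [hPi]) (Finset.mem_univ e)
  simp only [hPe, if_true] at this
  have := lt_of_lt_of_le (C.edg_pos he) this
  exact this

lemma Wc_eq {e : V × V} (he : C.Edg e) :
    C.Wt e - C.om e.1 e.2 = ∑ p ∈ C.Ns e, C.om p.1 p.2 := by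
  have h1 : Finset.univ.filter (fun p => C.Edg p ∧ C.Nst p e) = insert e (C.Ns e) := by
    ext q
    simp only [Finset.mem_filter, Finset.mem_univ, true_and, Finset.mem_insert, mem_Ns]
    constructor
    · intro hq
      by_cases hqe : q = e
      · exact Or.inl hqe
      · exact Or.inr ⟨hq.1, hq.2, hqe⟩
    · rintro (rfl | ⟨hq1, hq2, _⟩)
      · exact ⟨he, C.nst_refl _⟩
      · exact ⟨hq1, hq2⟩
  have h2 : C.Wt e = ∑ p ∈ Finset.univ.filter (fun p => C.Edg p ∧ C.Nst p e), C.om p.1 p.2 := by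
    rw [Finset.sum_filter]; rfl
  rw [h2, h1, Finset.sum_insert (by simp [Ns])]
  ring

lemma Wc_nonneg {e : V × V} (he : C.Edg e) : 0 ≤ C.Wt e - C.om e.1 e.2 := by
  rw [C.Wc_eq he]
  exact Finset.sum_nonneg fun p hp => (C.edg_pos ((C.mem_Ns.1 hp).1)).le

lemma Wc_pos {e : V × V} (he : C.Edg e) (hne : (C.Ns e).Nonempty) :
    0 < C.Wt e - C.om e.1 e.2 := by
  rw [C.Wc_eq he]
  obtain ⟨p, hp⟩ := hne
  exact Finset.sum_pos' (fun q hq => (C.edg_pos ((C.mem_Ns.1 hq).1)).le)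
    ⟨p, hp, C.edg_pos ((C.mem_Ns.1 hp).1)⟩

lemma Ns_empty_of_Wc_zero {e : V × V} (he : C.Edg e)
    (h : C.Wt e - C.om e.1 e.2 = 0) : C.Ns e = ∅ := by
  by_contra hne
  exact absurd h (ne_of_gt (C.Wc_pos he (Finset.nonempty_iff_ne_empty.2 hne)))

lemma factor_nonneg {q : V × V} (hq : C.Edg q) :
    0 ≤ (C.Wt q - C.om q.1 q.2) / C.Wt q :=
  div_nonneg (C.Wc_nonneg hq) (C.Wt_pos hq).le

lemma factor_le_one {q : V × V} (hq : C.Edg q) :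
    (C.Wt q - C.om q.1 q.2) / C.Wt q ≤ 1 := by
  rw [div_le_one (C.Wt_pos hq)]
  linarith [C.edg_pos hq]

lemma edg_of_mem_Anc {e q : V × V} (he : C.Edg e) (hq : q ∈ C.Anc e) : C.Edg q :=
  (C.mem_Anc.1 hq).1

lemma mem_Ns_of_mem_Anc {e q : V × V} (he : C.Edg e) (hq : q ∈ C.Anc e) : e ∈ C.Ns q := by
  obtain ⟨h1, h2, h3⟩ := C.mem_Anc.1 hq
  exact C.mem_Ns.2 ⟨he, h2, fun h => h3 h.symm⟩

lemma hi_pos {e : V × V} (he : C.Edg e) : 0 < C.hi e := by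
  apply mul_pos C.hH
  apply Finset.prod_pos
  intro q hq
  have hqe := C.edg_of_mem_Anc he hq
  exact div_pos (C.Wc_pos hqe ⟨e, C.mem_Ns_of_mem_Anc he hq⟩) (C.Wt_pos hqe)

lemma hi_le {e : V × V} (he : C.Edg e) : C.hi e ≤ C.H0 := by
  have h1 : ∏ q ∈ C.Anc e, ((C.Wt q - C.om q.1 q.2) / C.Wt q) ≤ 1 :=
    Finset.prod_le_one (fun q hq => C.factor_nonneg (C.edg_of_mem_Anc he hq))
      (fun q hq => C.factor_le_one (C.edg_of_mem_Anc he hq))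
  calc C.hi e ≤ C.H0 * 1 := by
        unfold hi
        exact mul_le_mul_of_nonneg_left h1 C.hH.le
    _ = C.H0 := mul_one _

lemma lo_nonneg {e : V × V} (he : C.Edg e) : 0 ≤ C.lo e :=
  mul_nonneg (C.hi_pos he).le (C.factor_nonneg he)

/-- comparability of two edges wrapping a common interval -/
lemma nst_cmp {p q c : V × V} (hp : C.Edg p) (hq : C.Edg q) (hc : C.f c.1 < C.f c.2)
    (h1 : C.Nst c p) (h2 : C.Nst c q) : C.Nst q p ∨ C.Nst p q := by
  rcases le_or_gt (C.f p.1) (C.f q.1) with hle | hlt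
  · -- p.1 ≤ q.1 : try q nested in p
    rcases le_or_gt (C.f q.2) (C.f p.2) with h2' | h2'
    · exact Or.inl ⟨hle, h2'⟩
    · rcases eq_or_lt_of_le hle with heq | hlt'
      · exact Or.inr ⟨heq.ge, h2'.le⟩
      · exact absurd ⟨hlt', lt_of_le_of_lt h2.1 (lt_of_lt_of_le hc h1.2),  h2'⟩
          (C.hcross p.1 p.2 q.1 q.2 hp.1 hq.1)
  · rcases le_or_gt (C.f p.2) (C.f q.2) with h2' | h2'
    · exact Or.inr ⟨hlt.le, h2'⟩
    · exact absurd ⟨hlt, lt_of_le_of_lt h1.1 (lt_of_lt_of_le hc h2.2), h2'⟩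
        (C.hcross q.1 q.2 p.1 p.2 hq.1 hp.1)

lemma anc_subset {e p : V × V} (he : C.Edg e) (hp : p ∈ C.Ns e) :
    insert e (C.Anc e) ⊆ C.Anc p := by
  obtain ⟨hp1, hp2, hp3⟩ := C.mem_Ns.1 hp
  intro q hq
  rcases Finset.mem_insert.1 hq with rfl | hq'
  · exact C.mem_Anc.2 ⟨he, hp2, fun h => hp3 h.symm⟩
  · obtain ⟨hq1, hq2, hq3⟩ := C.mem_Anc.1 hq'
    refine C.mem_Anc.2 ⟨hq1, C.nst_trans hp2 hq2, fun h => ?_⟩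
    subst h
    exact hp3 (C.nst_antisymm hp2 hq2)

lemma not_mem_Anc_self (e : V × V) : e ∉ C.Anc e := by simp [mem_Anc]

lemma lo_eq_prod {e : V × V} :
    C.lo e = C.H0 * ∏ q ∈ insert e (C.Anc e), ((C.Wt q - C.om q.1 q.2) / C.Wt q) := by
  rw [Finset.prod_insert (C.not_mem_Anc_self e)]
  unfold lo hi
  ring

lemma hi_nested_le {e p : V × V} (he : C.Edg e) (hp : p ∈ C.Ns e) :
    C.hi p ≤ C.lo e := by
  have hpe : C.Edg p := (C.mem_Ns.1 hp).1
  have hsub := C.anc_subset he hp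
  rw [C.lo_eq_prod]
  unfold hi
  apply mul_le_mul_of_nonneg_left _ C.hH.le
  rw [← Finset.prod_sdiff hsub]
  have h1 : ∏ q ∈ C.Anc p \ insert e (C.Anc e), ((C.Wt q - C.om q.1 q.2) / C.Wt q) ≤ 1 :=
    Finset.prod_le_one
      (fun q hq => C.factor_nonneg (C.edg_of_mem_Anc hpe (Finset.mem_sdiff.1 hq).1))
      (fun q hq => C.factor_le_one (C.edg_of_mem_Anc hpe (Finset.mem_sdiff.1 hq).1))
  have h2 : 0 ≤ ∏ q ∈ insert e (C.Anc e), ((C.Wt q - C.om q.1 q.2) / C.Wt q) :=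
    Finset.prod_nonneg fun q hq => C.factor_nonneg (C.edg_of_mem_Anc hpe (hsub hq))
  calc (∏ q ∈ C.Anc p \ insert e (C.Anc e), ((C.Wt q - C.om q.1 q.2) / C.Wt q)) *
        ∏ q ∈ insert e (C.Anc e), ((C.Wt q - C.om q.1 q.2) / C.Wt q)
      ≤ 1 * ∏ q ∈ insert e (C.Anc e), ((C.Wt q - C.om q.1 q.2) / C.Wt q) :=
        mul_le_mul_of_nonneg_right h1 h2
    _ = _ := one_mul _

lemma hi_child {e c : V × V} (h : C.Anc c = insert e (C.Anc e)) : C.hi c = C.lo e := by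
  rw [C.lo_eq_prod]
  unfold hi
  rw [h]

/-- mirror context -/
noncomputable def mir : Ctx V where
  G := C.G
  om := C.om
  f := fun v => -C.f v
  s := C.t
  t := C.s
  H0 := C.H0
  hpos := C.hpos
  hinj := fun u v h => C.hinj (by dsimp at h; linarith [h])
  hcross := by
    intro a b c d hab hcd h
    exact C.hcross d c b a hcd.symm hab.symm ⟨by linarith [h.2.2], by linarith [h.2.1], by linarith [h.1]⟩
  hdel := C.hdel
  hs := fun v => neg_le_neg (C.ht v)
  ht := fun v => neg_le_neg (C.hs v)
  hst := C.hst.symm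
  hH := C.hH

lemma consec_adj_aux {a b a₀ b₀ : V} (hab : C.Consec a b)
    (h0 : C.G.Adj a₀ b₀) (h0b : C.f b ≤ C.f b₀)
    (hmin : ∀ p q, C.G.Adj p q → C.f p ≤ C.f a → C.f b ≤ C.f q →
      C.f p ≤ C.f a₀ ∧ C.f b₀ ≤ C.f q)
    (hlt : C.f a₀ < C.f a) : False := by
  have hfab : C.f a < C.f b := hab.1
  have hane : a ∈ ({a₀} : Set V)ᶜ := by
    simp only [Set.mem_compl_iff, Set.mem_singleton_iff]
    intro h; subst h; exact lt_irrefl _ hlt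
  have hbne : b ∈ ({a₀} : Set V)ᶜ := by
    simp only [Set.mem_compl_iff, Set.mem_singleton_iff]
    intro h; subst h; linarith
  obtain ⟨wlk⟩ := (C.hdel a₀) ⟨a, hane⟩ ⟨b, hbne⟩
  suffices H : ∀ (x y : ↥(({a₀} : Set V)ᶜ)),
      (C.G.induce (({a₀} : Set V)ᶜ)).Walk x y →
      (C.f a₀ < C.f x.1 ∧ C.f x.1 ≤ C.f a) → C.f b ≤ C.f y.1 → False by
    exact H ⟨a, hane⟩ ⟨b, hbne⟩ wlk ⟨hlt, le_refl _⟩ (le_refl _)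
  intro x y w
  induction w with
  | nil =>
    rintro ⟨h1, h2⟩ h3
    linarith
  | @cons x y _ hadj p ih =>
    rintro ⟨hx1, hx2⟩ hb
    have hxy : C.G.Adj x.1 y.1 := by simpa [SimpleGraph.comap] using hadj
    have hy0' : (y : V) ≠ a₀ := by
      have h2 := y.2
      simp only [Set.mem_compl_iff, Set.mem_singleton_iff] at h2
      exact h2
    have hy0 : C.f y.1 ≠ C.f a₀ := fun h => hy0' (C.hinj h)
    refine ih ?_ hb
    rcases lt_trichotomy (C.f y.1) (C.f a₀) with h | h | h
    · exfalso
      refine C.hcross y.1 x.1 a₀ b₀ hxy.symm h0 ⟨h, hx1, by linarith⟩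
    · exact absurd h hy0
    · refine ⟨h, ?_⟩
      by_contra hc
      push_neg at hc
      have hby : C.f b ≤ C.f y.1 := by
        rcases lt_trichotomy (C.f y.1) (C.f b) with h' | h' | h'
        · exact absurd ⟨hc, h'⟩ (hab.2 y.1)
        · exact h'.ge
        · exact h'.le
      have := (hmin x.1 y.1 hxy hx2 hby).1
      linarith

lemma consec_adj {a b : V} (h : C.Consec a b) : C.G.Adj a b := by
  by_contra hn
  classical
  set D := Finset.univ.filter
    (fun p : V × V => C.G.Adj p.1 p.2 ∧ C.f p.1 ≤ C.f a ∧ C.f b ≤ C.f p.2) with hD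
  have hDst : (C.s, C.t) ∈ D := by
    simp only [hD, Finset.mem_filter, Finset.mem_univ, true_and]
    exact ⟨C.hst, C.hs a, C.ht b⟩
  obtain ⟨m, hmD, hmmin⟩ := Finset.exists_min_image D (fun p => C.f p.2 - C.f p.1) ⟨_, hDst⟩
  simp only [hD, Finset.mem_filter, Finset.mem_univ, true_and] at hmD
  obtain ⟨hmadj, hma, hmb⟩ := hmD
  have hstrong : ∀ p q, C.G.Adj p q → C.f p ≤ C.f a → C.f b ≤ C.f q →
      C.f p ≤ C.f m.1 ∧ C.f m.2 ≤ C.f q := by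
    intro p q hpq hpa hbq
    have hlen : C.f m.2 - C.f m.1 ≤ C.f q - C.f p := by
      refine hmmin (p, q) ?_
      simp only [hD, Finset.mem_filter, Finset.mem_univ, true_and]
      exact ⟨hpq, hpa, hbq⟩
    constructor
    · by_contra hc
      push_neg at hc
      have h1 : C.f p < C.f m.2 := by linarith [h.1]
      have h2 : ¬ (C.f m.2 < C.f q) := fun hq =>
        C.hcross m.1 m.2 p q hmadj hpq ⟨hc, h1, hq⟩
      push_neg at h2
      linarith
    · by_contra hc
      push_neg at hc
      have h1 : C.f m.1 < C.f q := by linarith [h.1]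
      have h2 : ¬ (C.f p < C.f m.1) := fun hp =>
        C.hcross p q m.1 m.2 hpq hmadj ⟨hp, h1, hc⟩
      push_neg at h2
      linarith
  have hcase : C.f m.1 < C.f a ∨ C.f b < C.f m.2 := by
    rcases eq_or_lt_of_le hma with h1 | h1
    · rcases eq_or_lt_of_le hmb with h2 | h2
      · exfalso
        have e1 : m.1 = a := C.hinj h1
        have e2 : m.2 = b := C.hinj h2.symm
        exact hn (e1 ▸ e2 ▸ hmadj)
      · exact Or.inr h2
    · exact Or.inl h1
  rcases hcase with hcs | hcs
  · exact C.consec_adj_aux h hmadj hmb (fun p q h1 h2 h3 => hstrong p q h1 h2 h3) hcs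
  · refine C.mir.consec_adj_aux (a := b) (b := a) (a₀ := m.2) (b₀ := m.1)
      ⟨neg_lt_neg h.1, fun w hw => h.2 w ⟨by simp only [mir] at hw; linarith [hw.2], by simp only [mir] at hw; linarith [hw.1]⟩⟩
      hmadj.symm (neg_le_neg hma) ?_ (neg_lt_neg hcs)
    intro p q hpq h1 h2
    simp only [mir] at h1 h2 ⊢
    obtain ⟨k1, k2⟩ := hstrong q p hpq.symm (by linarith) (by linarith)
    exact ⟨by linarith, by linarith⟩

lemma exists_succ {w z : V} (h : C.f w < C.f z) :
    ∃ b, C.Consec w b ∧ C.f b ≤ C.f z := by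
  classical
  set T := Finset.univ.filter (fun y => C.f w < C.f y) with hT
  have hzT : z ∈ T := by simp [hT, h]
  obtain ⟨b, hbT, hbmin⟩ := Finset.exists_min_image T C.f ⟨z, hzT⟩
  simp only [hT, Finset.mem_filter, Finset.mem_univ, true_and] at hbT
  refine ⟨b, ⟨hbT, fun y hy => ?_⟩, hbmin z hzT⟩
  have : y ∈ T := by simp [hT, hy.1]
  exact absurd (hbmin y this) (not_le.2 hy.2)

lemma xc_diff {u v : V} (h : C.f u ≤ C.f v) :
    C.xc v - C.xc u = ∑ p : V × V,
      if C.Consec p.1 p.2 ∧ C.f u < C.f p.2 ∧ C.f p.2 ≤ C.f v then C.Wt p / C.hi p else 0 := by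
  unfold xc
  rw [← Finset.sum_sub_distrib]
  apply Finset.sum_congr rfl
  intro p _
  by_cases hC : C.Consec p.1 p.2
  · by_cases h1 : C.f p.2 ≤ C.f u
    · have h2 : C.f p.2 ≤ C.f v := le_trans h1 h
      simp [hC, h1, h2, not_lt.2 h1]
    · by_cases h2 : C.f p.2 ≤ C.f v
      · simp [hC, h1, h2, not_le.1 h1]
      · simp [hC, h1, h2]
  · simp [hC]

lemma xc_mono {u v : V} (h : C.f u < C.f v) : C.xc u < C.xc v := by
  obtain ⟨b, hcb, hbv⟩ := C.exists_succ h
  have he : C.Edg (u, b) := ⟨C.consec_adj hcb, hcb.1⟩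
  have hterm : (0:ℝ) < C.Wt (u, b) / C.hi (u, b) := div_pos (C.Wt_pos he) (C.hi_pos he)
  have hd := C.xc_diff h.le
  have hle := Finset.single_le_sum
    (f := fun p : V × V => if C.Consec p.1 p.2 ∧ C.f u < C.f p.2 ∧ C.f p.2 ≤ C.f v
      then C.Wt p / C.hi p else 0)
    (fun p _ => by
      by_cases hc : C.Consec p.1 p.2 ∧ C.f u < C.f p.2 ∧ C.f p.2 ≤ C.f v
      · have hep : C.Edg p := ⟨C.consec_adj hc.1, hc.1.1⟩
        simp only [hc, if_true]
        exact (div_pos (C.Wt_pos hep) (C.hi_pos hep)).le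
      · simp [hc]) (Finset.mem_univ (u, b))
  have hcond : C.Consec (u, b).1 (u, b).2 ∧ C.f u < C.f (u, b).2 ∧ C.f (u, b).2 ≤ C.f v :=
    ⟨hcb, hcb.1, hbv⟩
  simp only [hcond, if_true] at hle
  have : 0 < C.xc v - C.xc u := by
    rw [hd]; exact lt_of_lt_of_le hterm hle
  linarith

lemma xc_lt_iff (u v : V) : C.xc u < C.xc v ↔ C.f u < C.f v := by
  constructor
  · intro h
    rcases lt_trichotomy (C.f u) (C.f v) with h' | h' | h'
    · exact h'
    · rw [C.hinj h'] at h; exact absurd h (lt_irrefl _)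
    · exact absurd (C.xc_mono h') (not_lt.2 h.le)
  · exact C.xc_mono

lemma xc_le_iff (u v : V) : C.xc u ≤ C.xc v ↔ C.f u ≤ C.f v := by
  rw [← not_lt, ← not_lt, C.xc_lt_iff]

lemma leaf_consec {e : V × V} (he : C.Edg e) (h : C.Ns e = ∅) : C.Consec e.1 e.2 := by
  refine ⟨he.2, fun w hw => ?_⟩
  obtain ⟨b, hcb, hbe⟩ := C.exists_succ hw.2
  have hmem : (w, b) ∈ C.Ns e := by
    refine C.mem_Ns.2 ⟨⟨C.consec_adj hcb, hcb.1⟩, ⟨hw.1.le, hbe⟩, fun hq => ?_⟩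
    have : w = e.1 := congrArg Prod.fst hq
    rw [this] at hw
    exact lt_irrefl _ hw.1
  rw [h] at hmem
  exact absurd hmem (Finset.notMem_empty _)

/-- the child construction -/
lemma child {e : V × V} (he : C.Edg e) (hne : (C.Ns e).Nonempty)
    {w : V} (hcp : C.ChainPt e w) (hwv : C.f w < C.f e.2) :
    ∃ z : V, C.G.Adj w z ∧ C.f w < C.f z ∧ C.f z ≤ C.f e.2 ∧ (w, z) ≠ e ∧
      C.ChainPt e z ∧ C.Anc (w, z) = insert e (C.Anc e) ∧
      (∀ p ∈ C.Ns e, C.f w ≤ C.f p.1 → (C.Nst p (w, z) ∨ C.f z ≤ C.f p.1)) := by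
  classical
  have hconsec_case : ¬ C.Consec e.1 e.2 := by
    intro hce
    obtain ⟨p, hp⟩ := hne
    obtain ⟨hp1, hp2, hp3⟩ := C.mem_Ns.1 hp
    have h1 : C.f p.1 < C.f e.2 := lt_of_lt_of_le hp1.2 hp2.2
    have h2 : p.1 = e.1 := by
      rcases eq_or_lt_of_le hp2.1 with h | h
      · exact C.hinj h.symm
      · exact absurd ⟨h, h1⟩ (hce.2 p.1)
    have h3 : C.f e.1 < C.f p.2 := by rw [← h2]; exact hp1.2
    have h4 : p.2 = e.2 := by
      rcases eq_or_lt_of_le hp2.2 with h | h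
      · exact C.hinj h
      · exact absurd ⟨h3, h⟩ (hce.2 p.2)
    exact hp3 (Prod.ext h2 h4)
  set Cand := Finset.univ.filter
    (fun z => C.G.Adj w z ∧ C.f w < C.f z ∧ C.f z ≤ C.f e.2 ∧ (w, z) ≠ e) with hCand
  have hCne : Cand.Nonempty := by
    obtain ⟨b, hcb, hbe⟩ := C.exists_succ hwv
    refine ⟨b, ?_⟩
    simp only [hCand, Finset.mem_filter, Finset.mem_univ, true_and]
    refine ⟨C.consec_adj hcb, hcb.1, hbe, fun hq => ?_⟩
    have hw1 : w = e.1 := congrArg Prod.fst hq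
    have hb2 : b = e.2 := congrArg Prod.snd hq
    exact hconsec_case (hw1 ▸ hb2 ▸ hcb)
  obtain ⟨z, hzC, hzmax⟩ := Finset.exists_max_image Cand C.f hCne
  simp only [hCand, Finset.mem_filter, Finset.mem_univ, true_and] at hzC
  obtain ⟨hz1, hz2, hz3, hz4⟩ := hzC
  have hmax : ∀ y, C.G.Adj w y → C.f w < C.f y → C.f y ≤ C.f e.2 → (w, y) ≠ e →
      C.f y ≤ C.f z := by
    intro y h1 h2 h3 h4
    exact hzmax y (by
      simp only [hCand, Finset.mem_filter, Finset.mem_univ, true_and]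
      exact ⟨h1, h2, h3, h4⟩)
  have hcpz : C.ChainPt e z := by
    refine ⟨le_trans hcp.1 (le_of_lt hz2), hz3, fun p hp hcontra => ?_⟩
    obtain ⟨hp1, hp2, hp3⟩ := C.mem_Ns.1 hp
    rcases lt_trichotomy (C.f p.1) (C.f w) with h | h | h
    · exact hcp.2.2 p hp ⟨h, lt_trans hz2 hcontra.2⟩
    · have hp1w : p.1 = w := C.hinj h
      have hne' : (w, p.2) ≠ e := by rw [← hp1w]; exact hp3
      have hle := hmax p.2 (by rw [← hp1w]; exact hp1.1) (h ▸ hp1.2) hp2.2 hne'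
      exact absurd hcontra.2 (not_lt.2 hle)
    · exact absurd ⟨h, hcontra.1, hcontra.2⟩ (C.hcross w z p.1 p.2 hz1 hp1.1)
  have hnst_ce : C.Nst (w, z) e := ⟨hcp.1, hz3⟩
  have hAnc : C.Anc (w, z) = insert e (C.Anc e) := by
    ext q
    simp only [Finset.mem_insert]
    constructor
    · intro hq
      obtain ⟨hq1, hq2, hq3⟩ := C.mem_Anc.1 hq
      rcases C.nst_cmp hq1 he (show C.f w < C.f z from hz2) hq2 hnst_ce with hqe | heq
      · by_cases hqe' : q = e
        · exact Or.inl hqe'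
        · exact Or.inr (C.mem_Anc.2 ⟨hq1, hqe, hqe'⟩)
      · by_cases hqe' : q = e
        · exact Or.inl hqe'
        · exfalso
          have hqNs : q ∈ C.Ns e := C.mem_Ns.2 ⟨hq1, heq, hqe'⟩
          rcases lt_trichotomy (C.f q.1) (C.f w) with h | h | h
          · exact hcp.2.2 q hqNs ⟨h, lt_of_lt_of_le hz2 hq2.2⟩
          · have hq1w : q.1 = w := C.hinj h
            have hq2z : C.f z < C.f q.2 := by
              rcases eq_or_lt_of_le hq2.2 with heq2 | hlt2
              · exact absurd (Prod.ext hq1w (C.hinj heq2.symm)) hq3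
              · exact hlt2
            have hne2 : (w, q.2) ≠ e := by rw [← hq1w]; exact hqe'
            have hle := hmax q.2 (by rw [← hq1w]; exact hq1.1) (h ▸ hq1.2) heq.2 hne2
            exact absurd hq2z (not_lt.2 hle)
          · exact absurd hq2.1 (not_le.2 h)
    · rintro (rfl | hq)
      · exact C.mem_Anc.2 ⟨he, hnst_ce, fun hh => hz4 hh.symm⟩
      · obtain ⟨hq1, hq2, hq3⟩ := C.mem_Anc.1 hq
        refine C.mem_Anc.2 ⟨hq1, C.nst_trans hnst_ce hq2, fun hqwz => ?_⟩
        subst hqwz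
        have h1 : w = e.1 := C.hinj (le_antisymm hq2.1 hcp.1)
        have h2 : z = e.2 := C.hinj (le_antisymm hz3 hq2.2)
        exact hz4 (Prod.ext h1 h2)
  refine ⟨z, hz1, hz2, hz3, hz4, hcpz, hAnc, ?_⟩
  intro p hp hwp
  by_cases hzp : C.f z ≤ C.f p.1
  · exact Or.inr hzp
  · push_neg at hzp
    left
    refine ⟨hwp, ?_⟩
    by_contra hc
    push_neg at hc
    exact hcpz.2.2 p hp ⟨hzp, hc⟩

lemma walk_end {e : V × V} {w : V} (he : C.Edg e) (hcp : C.ChainPt e w)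
    (hwv : ¬ C.f w < C.f e.2) :
    (C.xc e.2 - C.xc w) * C.lo e
      = ∑ p ∈ (C.Ns e).filter (fun p => C.f w ≤ C.f p.1), C.om p.1 p.2 := by
  classical
  have hw : w = e.2 := C.hinj (le_antisymm hcp.2.1 (not_lt.1 hwv))
  subst hw
  rw [sub_self, zero_mul]
  rw [Finset.filter_false_of_mem, Finset.sum_empty]
  intro p hp
  obtain ⟨hp1, hp2, _⟩ := C.mem_Ns.1 hp
  exact not_le.2 (lt_of_lt_of_le hp1.2 hp2.2)

lemma walk {e : V × V} (he : C.Edg e) (hne : (C.Ns e).Nonempty)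
    (HC : ∀ p ∈ C.Ns e, (C.xc p.2 - C.xc p.1) * C.hi p = C.Wt p) :
    ∀ (k : ℕ) (w : V), C.ChainPt e w →
      (Finset.univ.filter fun z => C.f w < C.f z).card ≤ k →
      (C.xc e.2 - C.xc w) * C.lo e
        = ∑ p ∈ (C.Ns e).filter (fun p => C.f w ≤ C.f p.1), C.om p.1 p.2 := by
  classical
  intro k
  induction k with
  | zero =>
    intro w hcp hcard
    refine C.walk_end he hcp (fun h => ?_)
    have hmem : e.2 ∈ Finset.univ.filter (fun z => C.f w < C.f z) := by
      simp only [Finset.mem_filter, Finset.mem_univ, true_and]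
      exact h
    have := Finset.card_pos.2 ⟨_, hmem⟩
    omega
  | succ k ih =>
    intro w hcp hcard
    by_cases hwv : C.f w < C.f e.2
    · obtain ⟨z, hz1, hz2, hz3, hz4, hcpz, hAnc, hdich⟩ := C.child he hne hcp hwv
      have hcz : C.Edg (w, z) := ⟨hz1, hz2⟩
      have hczNs : (w, z) ∈ C.Ns e := C.mem_Ns.2 ⟨hcz, ⟨hcp.1, hz3⟩, hz4⟩
      have hhic : C.hi (w, z) = C.lo e := C.hi_child hAnc
      have hIH : (C.xc e.2 - C.xc z) * C.lo e
          = ∑ p ∈ (C.Ns e).filter (fun p => C.f z ≤ C.f p.1), C.om p.1 p.2 := by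
        refine ih z hcpz ?_
        have hsub : Finset.univ.filter (fun y => C.f z < C.f y)
            ⊆ Finset.univ.filter (fun y => C.f w < C.f y) := by
          intro y hy
          simp only [Finset.mem_filter, Finset.mem_univ, true_and] at hy ⊢
          exact lt_trans hz2 hy
        have hlt := Finset.card_lt_card ((Finset.ssubset_iff_of_subset hsub).2
          ⟨z, by simp only [Finset.mem_filter, Finset.mem_univ, true_and]; exact hz2,
            by simp only [Finset.mem_filter, Finset.mem_univ, true_and]; exact lt_irrefl _⟩)
        omega
      have hdisj : Disjoint ((C.Ns e).filter (fun p => C.f z ≤ C.f p.1))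
          (Finset.univ.filter (fun p : V × V => C.Edg p ∧ C.Nst p (w, z))) := by
        rw [Finset.disjoint_left]
        intro p hp1 hp2
        simp only [Finset.mem_filter, Finset.mem_univ, true_and] at hp1 hp2
        obtain ⟨hpNs, hzp⟩ := hp1
        exact absurd (lt_of_lt_of_le hp2.1.2 (le_trans hp2.2.2 hzp)) (lt_irrefl _)
      have hsplit : (C.Ns e).filter (fun p => C.f w ≤ C.f p.1)
          = (C.Ns e).filter (fun p => C.f z ≤ C.f p.1)
            ∪ Finset.univ.filter (fun p : V × V => C.Edg p ∧ C.Nst p (w, z)) := by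
        ext p
        simp only [Finset.mem_union, Finset.mem_filter, Finset.mem_univ, true_and]
        constructor
        · rintro ⟨hpNs, hwp⟩
          rcases hdich p hpNs hwp with hnst | hzp
          · exact Or.inr ⟨(C.mem_Ns.1 hpNs).1, hnst⟩
          · exact Or.inl ⟨hpNs, hzp⟩
        · rintro (⟨hpNs, hzp⟩ | ⟨hpE, hpnst⟩)
          · exact ⟨hpNs, le_trans hz2.le hzp⟩
          · refine ⟨C.mem_Ns.2 ⟨hpE, C.nst_trans hpnst ⟨hcp.1, hz3⟩, fun hpe => ?_⟩, hpnst.1⟩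
            have h1 : e.1 = w := C.hinj (le_antisymm hcp.1 (hpe ▸ hpnst.1))
            have h2 : e.2 = z := C.hinj (le_antisymm (hpe ▸ hpnst.2) hz3)
            exact hz4 (Prod.ext h1 h2).symm
      have hWtc : C.Wt (w, z)
          = ∑ p ∈ Finset.univ.filter (fun p : V × V => C.Edg p ∧ C.Nst p (w, z)),
              C.om p.1 p.2 := by
        rw [Finset.sum_filter]; rfl
      calc (C.xc e.2 - C.xc w) * C.lo e
          = (C.xc e.2 - C.xc z) * C.lo e + (C.xc z - C.xc w) * C.hi (w, z) := by
            rw [hhic]; ring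
        _ = (∑ p ∈ (C.Ns e).filter (fun p => C.f z ≤ C.f p.1), C.om p.1 p.2)
            + C.Wt (w, z) := by rw [hIH, HC _ hczNs]
        _ = ∑ p ∈ ((C.Ns e).filter (fun p => C.f z ≤ C.f p.1)
              ∪ Finset.univ.filter (fun p : V × V => C.Edg p ∧ C.Nst p (w, z))),
              C.om p.1 p.2 := by rw [Finset.sum_union hdisj, hWtc]
        _ = _ := by rw [← hsplit]
    · exact C.walk_end he hcp hwv

lemma main_leaf {e : V × V} (he : C.Edg e) (hns : C.Ns e = ∅) :
    (C.xc e.2 - C.xc e.1) * C.hi e = C.Wt e := by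
  classical
  have hcc : C.Consec e.1 e.2 := C.leaf_consec he hns
  have hd := C.xc_diff he.2.le
  have hsingle : (∑ p : V × V, if C.Consec p.1 p.2 ∧ C.f e.1 < C.f p.2 ∧ C.f p.2 ≤ C.f e.2
      then C.Wt p / C.hi p else 0) = C.Wt e / C.hi e := by
    rw [Finset.sum_eq_single_of_mem e (Finset.mem_univ e)]
    · simp only [hcc, he.2, le_refl, and_self, if_true]
    · intro p _ hpe
      rw [if_neg]
      rintro ⟨h1, h2, h3⟩
      have hp2 : p.2 = e.2 := by
        rcases eq_or_lt_of_le h3 with h | h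
        · exact C.hinj h
        · exact absurd ⟨h2, h⟩ (hcc.2 p.2)
      have hp1 : p.1 = e.1 := by
        rcases lt_trichotomy (C.f p.1) (C.f e.1) with h | h | h
        · exact absurd ⟨h, by rw [hp2]; exact he.2⟩ (h1.2 e.1)
        · exact C.hinj h
        · exact absurd ⟨h, by rw [← hp2]; exact h1.1⟩ (hcc.2 p.1)
      exact hpe (Prod.ext hp1 hp2)
  rw [hsingle] at hd
  rw [hd, div_mul_cancel₀ _ (ne_of_gt (C.hi_pos he))]

lemma main : ∀ (n : ℕ) (e : V × V), C.Edg e → (C.Ns e).card ≤ n →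
    (C.xc e.2 - C.xc e.1) * C.hi e = C.Wt e := by
  intro n
  induction n with
  | zero =>
    intro e he hcard
    exact C.main_leaf he (Finset.card_eq_zero.1 (le_antisymm hcard (Nat.zero_le _)))
  | succ n ih =>
    intro e he hcard
    by_cases hns : C.Ns e = ∅
    · exact C.main_leaf he hns
    · have hne : (C.Ns e).Nonempty := Finset.nonempty_iff_ne_empty.2 hns
      have HC : ∀ p ∈ C.Ns e, (C.xc p.2 - C.xc p.1) * C.hi p = C.Wt p := by
        intro p hp
        refine ih p (C.mem_Ns.1 hp).1 ?_
        have hsub : C.Ns p ⊆ C.Ns e := by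
          intro q hq
          obtain ⟨hq1, hq2, hq3⟩ := C.mem_Ns.1 hq
          obtain ⟨hp1, hp2, hp3⟩ := C.mem_Ns.1 hp
          refine C.mem_Ns.2 ⟨hq1, C.nst_trans hq2 hp2, fun hqe => ?_⟩
          subst hqe
          exact hp3 (C.nst_antisymm hp2 hq2)
        have hlt := Finset.card_lt_card ((Finset.ssubset_iff_of_subset hsub).2
          ⟨p, hp, by simp [Ns]⟩)
        omega
      have hcp1 : C.ChainPt e e.1 := ⟨le_refl _, he.2.le, fun p hp hcon =>
        absurd (C.mem_Ns.1 hp).2.1.1 (not_le.2 hcon.1)⟩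
      have hwalk := C.walk he hne HC
        (Finset.univ.filter fun z => C.f e.1 < C.f z).card e.1 hcp1 le_rfl
      have hfil : (C.Ns e).filter (fun p => C.f e.1 ≤ C.f p.1) = C.Ns e := by
        apply Finset.filter_true_of_mem
        intro p hp
        exact (C.mem_Ns.1 hp).2.1.1
      rw [hfil, ← C.Wc_eq he] at hwalk
      have hWt := C.Wt_pos he
      have hWc := C.Wc_pos he hne
      have hhi := C.hi_pos he
      have hlo : C.lo e * C.Wt e = C.hi e * (C.Wt e - C.om e.1 e.2) := by
        unfold lo
        field_simp
      have key : ((C.xc e.2 - C.xc e.1) * C.hi e) * (C.Wt e - C.om e.1 e.2)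
          = C.Wt e * (C.Wt e - C.om e.1 e.2) := by
        calc ((C.xc e.2 - C.xc e.1) * C.hi e) * (C.Wt e - C.om e.1 e.2)
            = (C.xc e.2 - C.xc e.1) * (C.hi e * (C.Wt e - C.om e.1 e.2)) := by ring
          _ = (C.xc e.2 - C.xc e.1) * (C.lo e * C.Wt e) := by rw [hlo]
          _ = ((C.xc e.2 - C.xc e.1) * C.lo e) * C.Wt e := by ring
          _ = (C.Wt e - C.om e.1 e.2) * C.Wt e := by rw [hwalk]
          _ = C.Wt e * (C.Wt e - C.om e.1 e.2) := by ring
      exact mul_right_cancel₀ (ne_of_gt hWc) key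

lemma consec_Ns_empty {a b : V} (hcc : C.Consec a b) : C.Ns (a, b) = ∅ := by
  rw [Finset.eq_empty_iff_forall_notMem]
  intro p hp
  obtain ⟨hp1, hp2, hp3⟩ := C.mem_Ns.1 hp
  have h1 : C.f p.1 < C.f b := lt_of_lt_of_le hp1.2 hp2.2
  have h2 : p.1 = a := by
    rcases eq_or_lt_of_le hp2.1 with h | h
    · exact C.hinj h.symm
    · exact absurd ⟨h, h1⟩ (hcc.2 p.1)
  have h3 : C.f a < C.f p.2 := by rw [← h2]; exact hp1.2
  have h4 : p.2 = b := by
    rcases eq_or_lt_of_le hp2.2 with h | h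
    · exact C.hinj h
    · exact absurd ⟨h3, h⟩ (hcc.2 p.2)
  exact hp3 (Prod.ext h2 h4)

lemma lo_zero_of_Ns_empty {e : V × V} (he : C.Edg e) (h : C.Ns e = ∅) : C.lo e = 0 := by
  have h0 : C.Wt e - C.om e.1 e.2 = 0 := by
    rw [C.Wc_eq he, h, Finset.sum_empty]
  unfold lo
  rw [h0]
  simp

lemma edg_st : C.Edg (C.s, C.t) :=
  ⟨C.hst, lt_of_le_of_ne (C.hs C.t) (fun h => C.hst.ne (C.hinj h))⟩

lemma Anc_st : C.Anc (C.s, C.t) = ∅ := by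
  rw [Finset.eq_empty_iff_forall_notMem]
  intro q hq
  obtain ⟨hq1, hq2, hq3⟩ := C.mem_Anc.1 hq
  apply hq3
  exact Prod.ext (C.hinj (le_antisymm hq2.1 (C.hs q.1))) (C.hinj (le_antisymm (C.ht q.2) hq2.2))

lemma hi_st : C.hi (C.s, C.t) = C.H0 := by
  unfold hi
  rw [C.Anc_st, Finset.prod_empty, mul_one]

end Ctx

/-- a biconnected weighted graph with a 1-page book-embedding whose first
and last vertices are adjacent admits a two-dimensional book-embedding, supported by
that book-embedding, whose bounding box is an `L₀ × H₀` rectangle, for any prescribed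
`L₀, H₀ > 0` with `L₀ · H₀` equal to the total weight of the edges. -/
theorem twodim_embedding_in_prescribed_box {V : Type*} [Fintype V]
    (G : SimpleGraph V) (ω : V → V → ℝ)
    (hsym : ∀ u v, ω u v = ω v u)
    (hpos : ∀ u v, G.Adj u v → 0 < ω u v)
    (hbi : IsBiconnected G)
    (f : V → ℝ) (hf : IsBE G f)
    (s t : V) (hs : ∀ v, f s ≤ f v) (ht : ∀ v, f v ≤ f t) (hst : G.Adj s t)
    (L₀ H₀ : ℝ) (hL : 0 < L₀) (hH : 0 < H₀)
    (hprod : L₀ * H₀ = totalWeight G ω f) :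
    ∃ (x : V → ℝ) (ylo yhi : V → V → ℝ),
      IsTwoDimBE G ω x ylo yhi ∧
      (∀ u v : V, x u < x v ↔ f u < f v) ∧
      ∃ X₁ Y₁ : ℝ, IsBoundingBox G x ylo yhi X₁ (X₁ + L₀) Y₁ (Y₁ + H₀) := by
  classical
  set C : Ctx V :=
    { G := G, om := ω, f := f, s := s, t := t, H0 := H₀, hpos := hpos,
      hinj := hf.1, hcross := hf.2, hdel := hbi.2.2, hs := hs, ht := ht,
      hst := hst, hH := hH } with hC
  have hord : ∀ u v, C.xc u < C.xc v ↔ f u < f v := C.xc_lt_iff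
  have hordle : ∀ u v, C.xc u ≤ C.xc v ↔ f u ≤ f v := C.xc_le_iff
  have hest : C.Edg (s, t) := C.edg_st
  have hylo_nonneg : ∀ u v, G.Adj u v →
      0 ≤ (if f u < f v then C.lo (u, v) else C.lo (v, u)) := by
    intro u v huv
    by_cases h1 : f u < f v
    · rw [if_pos h1]; exact C.lo_nonneg ⟨huv, h1⟩
    · rw [if_neg h1]
      have h2 : f v < f u := by
        rcases lt_trichotomy (f v) (f u) with h | h | h
        · exact h
        · exact absurd (hf.1 h) huv.ne'
        · exact absurd h h1
      exact C.lo_nonneg ⟨huv.symm, h2⟩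
  refine ⟨C.xc, fun u v => if f u < f v then C.lo (u, v) else C.lo (v, u),
    fun u v => if f u < f v then C.hi (u, v) else C.hi (v, u), ?_, hord, ?_⟩
  · -- IsTwoDimBE
    have hwrap_mem : ∀ u v w z, f u < f v → Wraps G C.xc u v w z →
        ((w, z) : V × V) ∈ C.Ns (u, v) ∧ f w < f z := by
      intro u v w z hfuv hw
      obtain ⟨_, hwz, hsne, h1, h2, h3⟩ := hw
      have hfwz : f w < f z := (hord w z).1 h2
      have hfuw : f u ≤ f w := (hordle u w).1 h1
      have hfzv : f z ≤ f v := (hordle z v).1 h3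
      have hne : ((w, z) : V × V) ≠ (u, v) := by
        intro hq
        have hw' : w = u := congrArg Prod.fst hq
        have hz' : z = v := congrArg Prod.snd hq
        subst hw'; subst hz'
        exact hsne rfl
      exact ⟨C.mem_Ns.2 ⟨⟨hwz, hfwz⟩, ⟨hfuw, hfzv⟩, hne⟩, hfwz⟩
    refine ⟨?_, ?_, ?_, hylo_nonneg, ?_, ?_⟩
    · -- IsBE
      refine ⟨fun u v h => ?_, fun a b c d hab hcd hcon =>
        hf.2 a b c d hab hcd
          ⟨(hord _ _).1 hcon.1, (hord _ _).1 hcon.2.1, (hord _ _).1 hcon.2.2⟩⟩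
      rcases lt_trichotomy (f u) (f v) with hh | hh | hh
      · have := C.xc_mono hh; rw [h] at this; exact absurd this (lt_irrefl _)
      · exact hf.1 hh
      · have := C.xc_mono hh; rw [h] at this; exact absurd this (lt_irrefl _)
    · -- ylo symmetric
      intro u v
      dsimp only
      by_cases h1 : f u < f v
      · rw [if_pos h1, if_neg (not_lt.2 h1.le)]
      · by_cases h2 : f v < f u
        · rw [if_neg h1, if_pos h2]
        · have : u = v := hf.1 (le_antisymm (not_lt.1 h2) (not_lt.1 h1))
          subst this; rfl
    · -- yhi symmetric
      intro u v
      dsimp only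
      by_cases h1 : f u < f v
      · rw [if_pos h1, if_neg (not_lt.2 h1.le)]
      · by_cases h2 : f v < f u
        · rw [if_neg h1, if_pos h2]
        · have : u = v := hf.1 (le_antisymm (not_lt.1 h2) (not_lt.1 h1))
          subst this; rfl
    · -- area
      intro u v huv hxlt
      dsimp only
      have hfuv := (hord u v).1 hxlt
      have he : C.Edg (u, v) := ⟨huv, hfuv⟩
      rw [if_pos hfuv, if_pos hfuv]
      have hmain := C.main (C.Ns (u, v)).card (u, v) he le_rfl
      have hWt := C.Wt_pos he
      have hhi := C.hi_pos he
      have hdiff : C.hi (u, v) - C.lo (u, v)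
          = C.hi (u, v) * C.om (u, v).1 (u, v).2 / C.Wt (u, v) := by
        unfold Ctx.lo
        field_simp
        ring
      calc (C.xc v - C.xc u) * (C.hi (u, v) - C.lo (u, v))
          = (C.xc v - C.xc u) * (C.hi (u, v) * C.om (u, v).1 (u, v).2 / C.Wt (u, v)) := by
            rw [hdiff]
        _ = ((C.xc v - C.xc u) * C.hi (u, v)) * C.om (u, v).1 (u, v).2 / C.Wt (u, v) := by
            ring
        _ = C.Wt (u, v) * C.om (u, v).1 (u, v).2 / C.Wt (u, v) := by rw [hmain]
        _ = C.om (u, v).1 (u, v).2 := mul_div_cancel_left₀ _ (ne_of_gt hWt)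
        _ = ω u v := rfl
    · -- wraps
      intro u v huv hxlt
      have hfuv := (hord u v).1 hxlt
      have he : C.Edg (u, v) := ⟨huv, hfuv⟩
      constructor
      · intro w z hw
        dsimp only
        obtain ⟨hmem, hfwz⟩ := hwrap_mem u v w z hfuv hw
        rw [if_pos hfwz, if_pos hfuv]
        exact C.hi_nested_le he hmem
      · by_cases hns : C.Ns (u, v) = ∅
        · right
          constructor
          · rintro ⟨w, z, hw⟩
            obtain ⟨hmem, _⟩ := hwrap_mem u v w z hfuv hw
            rw [hns] at hmem
            exact absurd hmem (Finset.notMem_empty _)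
          · dsimp only
            rw [if_pos hfuv]
            exact C.lo_zero_of_Ns_empty he hns
        · left
          have hne' : (C.Ns (u, v)).Nonempty := Finset.nonempty_iff_ne_empty.2 hns
          have hcp : C.ChainPt (u, v) u := ⟨le_refl _, he.2.le, fun p hp hcon =>
            absurd (C.mem_Ns.1 hp).2.1.1 (not_le.2 hcon.1)⟩
          obtain ⟨z, hz1, hz2, hz3, hz4, hcpz, hAnc, _⟩ := C.child he hne' hcp he.2
          refine ⟨u, z, ⟨huv, hz1, ?_, le_refl _, (hord u z).2 hz2, (hordle z v).2 hz3⟩, ?_⟩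
          · intro hss
            rcases Sym2.eq_iff.1 hss with ⟨_, hvz⟩ | ⟨huz, _⟩
            · exact hz4 (Prod.ext rfl hvz.symm)
            · rw [← huz] at hz2; exact absurd hz2 (lt_irrefl _)
          · dsimp only
            rw [if_pos hfuv, if_pos hz2]
            exact (C.hi_child hAnc).symm
  · -- bounding box
    have hWtst : C.Wt (s, t) = totalWeight G ω f := by
      unfold Ctx.Wt totalWeight
      apply Finset.sum_congr rfl
      intro p _
      refine if_congr ?_ rfl rfl
      constructor
      · rintro ⟨h1, _⟩; exact h1
      · intro h1; exact ⟨h1, hs _, ht _⟩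
    have hxst : C.xc t - C.xc s = L₀ := by
      have hmain := C.main (C.Ns (s, t)).card (s, t) hest le_rfl
      rw [C.hi_st, hWtst, ← hprod] at hmain
      exact mul_right_cancel₀ (ne_of_gt hH) hmain
    refine ⟨C.xc s, 0, ?_, ?_, ?_, ?_, ?_⟩
    · intro u v huv hxlt
      have hfuv := (hord u v).1 hxlt
      refine ⟨(hordle s u).2 (hs u), ?_, ?_, ?_⟩
      · have h1 : C.xc v ≤ C.xc t := (hordle v t).2 (ht v)
        linarith
      · exact hylo_nonneg u v huv
      · dsimp only
        rw [if_pos hfuv]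
        have := C.hi_le (⟨huv, hfuv⟩ : C.Edg (u, v))
        linarith
    · exact ⟨s, t, hst, (hord s t).2 hest.2, rfl⟩
    · exact ⟨s, t, hst, (hord s t).2 hest.2, by linarith⟩
    · obtain ⟨b, hcb, hbt⟩ := C.exists_succ hest.2
      have hadj : G.Adj s b := C.consec_adj hcb
      refine ⟨s, b, hadj, (hord s b).2 hcb.1, ?_⟩
      dsimp only
      rw [if_pos hcb.1]
      exact C.lo_zero_of_Ns_empty ⟨hadj, hcb.1⟩ (C.consec_Ns_empty hcb)
    · refine ⟨s, t, hst, (hord s t).2 hest.2, ?_⟩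
      dsimp only
      rw [if_pos hest.2]
      rw [C.hi_st]
      ring

end Schematic
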